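/- arXiv:2405.20864 — 2 statements merged into one kernel-verified Lean document; each statement's English description precedes it below -/
import Mathlib

section
/- Let A be a self-adjoint operator on a finite-dimensional complex inner product space V and v ∈ V a nonzero vector. Then the function f(t) = log ‖exp(tA) v‖² is convex on ℝ; in fact f''(t) ≥ 0 for all t, with f''(t) = 0 at some t only if exp(tA)v is an eigenvector of A. -/
open scoped ComplexInnerProductSpace

/-- For a self-adjoint operator `A` on a finite-dimensional
complex inner product space and `v ≠ 0`, the function
`f(t) = log ‖exp(tA) v‖²` is convex on `ℝ`; in fact `f'' ≥ 0` everywhere, and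
`f''(t) = 0` only if `exp(tA)v` is an eigenvector of `A`. -/
theorem stmt11 {V : Type*} [NormedAddCommGroup V] [InnerProductSpace ℂ V]
    [FiniteDimensional ℂ V]
    (A : V →L[ℂ] V)
    (hA : ∀ x y : V, ⟪A x, y⟫ = ⟪x, A y⟫)   -- A self-adjoint
    (v : V) (hv : v ≠ 0)
    (f : ℝ → ℝ)
    (hf : ∀ t : ℝ, f t = Real.log (‖(NormedSpace.exp (t • A)) v‖ ^ 2)) :
    ConvexOn ℝ Set.univ f
    ∧ (∀ t : ℝ, 0 ≤ deriv (deriv f) t)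
    ∧ (∀ t : ℝ, deriv (deriv f) t = 0 →
        ∃ c : ℂ, A ((NormedSpace.exp (t • A)) v)
          = c • ((NormedSpace.exp (t • A)) v)) := by
  have hexp : ∀ t : ℝ, NormedSpace.exp (t • A) = NormedSpace.exp (t • A) :=
    fun t => rfl
  set g : ℝ → V := fun t => (NormedSpace.exp (t • A)) v with hgdef
  -- derivative of g
  have hg : ∀ t : ℝ, HasDerivAt g (A (g t)) t := by
    intro t
    have h1 : HasDerivAt (fun u : ℝ => NormedSpace.exp (u • A))
        (NormedSpace.exp (t • A) * A) t := hasDerivAt_exp_smul_const A t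
    have h2 := (((ContinuousLinearMap.apply ℂ V v).restrictScalars
        ℝ).hasFDerivAt.comp_hasDerivAt t h1)
    have hc : A * NormedSpace.exp (t • A) = NormedSpace.exp (t • A) * A :=
      (((Commute.refl A).smul_right t).exp_right).eq
    have : HasDerivAt (fun u : ℝ => (NormedSpace.exp (u • A)) v)
        ((NormedSpace.exp (t • A) * A) v) t := h2
    rw [← hc] at this
    simpa [hgdef, hexp, ContinuousLinearMap.mul_apply] using this
  -- g never vanishes
  have hgne : ∀ t : ℝ, g t ≠ 0 := by
    intro t hzero
    have hcomm : Commute (-(t • A)) (t • A) := (Commute.refl _).neg_left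
    have h1 : NormedSpace.exp (-(t • A)) * NormedSpace.exp (t • A) = 1 := by
      rw [← NormedSpace.exp_add_of_commute_of_mem_ball (𝕂 := ℂ) hcomm
        ((NormedSpace.expSeries_radius_eq_top ℂ (V →L[ℂ] V)).symm ▸ edist_lt_top _ _)
        ((NormedSpace.expSeries_radius_eq_top ℂ (V →L[ℂ] V)).symm ▸ edist_lt_top _ _)]
      simp
    have h2 : (NormedSpace.exp (-(t • A))) (g t) = v := by
      have := congrArg (fun B : V →L[ℂ] V => B v) h1
      simpa [ContinuousLinearMap.mul_apply, hgdef] using this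
    rw [hzero] at h2
    simp at h2
    exact hv h2.symm
  set N : ℝ → ℝ := fun t => ‖g t‖ ^ 2 with hNdef
  have hNpos : ∀ t, 0 < N t := fun t => by
    show 0 < ‖g t‖ ^ 2
    exact pow_pos (norm_pos_iff.mpr (hgne t)) 2
  have hNne : ∀ t, N t ≠ 0 := fun t => (hNpos t).ne'
  set N1 : ℝ → ℝ := fun t => 2 * (⟪A (g t), g t⟫ : ℂ).re with hN1def
  -- derivative of N
  have hAg : ∀ t : ℝ, HasDerivAt (fun t => A (g t)) (A (A (g t))) t := fun t =>
    (A.restrictScalars ℝ).hasFDerivAt.comp_hasDerivAt t (hg t)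
  have hN : ∀ t : ℝ, HasDerivAt N (N1 t) t := by
    intro t
    have h1 : HasDerivAt (fun t => (⟪g t, g t⟫ : ℂ))
        (⟪g t, A (g t)⟫ + ⟪A (g t), g t⟫) t := (hg t).inner ℂ (hg t)
    have h2 := Complex.reCLM.hasFDerivAt.comp_hasDerivAt t h1
    have he : ((⟪g t, A (g t)⟫ + ⟪A (g t), g t⟫ : ℂ)).re = N1 t := by
      rw [← hA (g t) (g t)]
      simp [hN1def]; ring
    have hfun : (fun t => (⟪g t, g t⟫ : ℂ).re) = N := by
      funext s
      have h := inner_self_eq_norm_sq (𝕜 := ℂ) (g s)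
      simp only [RCLike.re_to_complex] at h
      exact h
    rw [← hfun]
    simpa only [Complex.reCLM_apply, he, Function.comp_def] using h2
  -- derivative of N1
  have hN1 : ∀ t : ℝ, HasDerivAt N1 (4 * ‖A (g t)‖ ^ 2) t := by
    intro t
    have h1 : HasDerivAt (fun t => (⟪A (g t), g t⟫ : ℂ))
        (⟪A (g t), A (g t)⟫ + ⟪A (A (g t)), g t⟫) t := (hAg t).inner ℂ (hg t)
    have h2 := Complex.reCLM.hasFDerivAt.comp_hasDerivAt t h1
    have h3 : HasDerivAt (fun t => (⟪A (g t), g t⟫ : ℂ).re)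
        (2 * ‖A (g t)‖ ^ 2) t := by
      have he : ((⟪A (g t), A (g t)⟫ + ⟪A (A (g t)), g t⟫ : ℂ)).re
          = 2 * ‖A (g t)‖ ^ 2 := by
        rw [hA (A (g t)) (g t)]
        have h := inner_self_eq_norm_sq (𝕜 := ℂ) (A (g t))
        simp only [RCLike.re_to_complex] at h
        simp only [Complex.add_re]
        rw [h]; ring
      simpa only [Complex.reCLM_apply, he, Function.comp_def] using h2
    have h4 : HasDerivAt (fun y => 2 * (⟪A (g y), g y⟫ : ℂ).re)
        (2 * (2 * ‖A (g t)‖ ^ 2)) t := h3.const_mul 2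
    have h5 : (4 : ℝ) * ‖A (g t)‖ ^ 2 = 2 * (2 * ‖A (g t)‖ ^ 2) := by ring
    rw [hN1def, h5]
    exact h4
  -- f' and f''
  have hfeq : f = fun t => Real.log (N t) := by
    funext t; rw [hf t]
  have hf1 : ∀ t : ℝ, HasDerivAt f (N1 t / N t) t := by
    intro t
    rw [hfeq]
    exact (hN t).log (hNne t)
  have hderiv1 : deriv f = fun t => N1 t / N t := funext fun t => (hf1 t).deriv
  have hf2 : ∀ t : ℝ, HasDerivAt (deriv f)
      ((4 * ‖A (g t)‖ ^ 2 * N t - N1 t * N1 t) / N t ^ 2) t := by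
    intro t
    rw [hderiv1]
    exact (hN1 t).div (hN t) (hNne t)
  have hderiv2 : ∀ t : ℝ, deriv (deriv f) t
      = (4 * ‖A (g t)‖ ^ 2 * N t - N1 t * N1 t) / N t ^ 2 :=
    fun t => (hf2 t).deriv
  -- key Cauchy-Schwarz inequality on the numerator
  have hnum : ∀ t : ℝ, N1 t * N1 t ≤ 4 * ‖A (g t)‖ ^ 2 * N t := by
    intro t
    have h1 : |(⟪A (g t), g t⟫ : ℂ).re| ≤ ‖(⟪A (g t), g t⟫ : ℂ)‖ :=
      Complex.abs_re_le_norm _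
    have h2 : ‖(⟪A (g t), g t⟫ : ℂ)‖ ≤ ‖A (g t)‖ * ‖g t‖ := norm_inner_le_norm _ _
    have h3 : (⟪A (g t), g t⟫ : ℂ).re ^ 2 ≤ (‖A (g t)‖ * ‖g t‖) ^ 2 := by
      calc (⟪A (g t), g t⟫ : ℂ).re ^ 2 = |(⟪A (g t), g t⟫ : ℂ).re| ^ 2 := (sq_abs _).symm
        _ ≤ ‖(⟪A (g t), g t⟫ : ℂ)‖ ^ 2 := by
            exact pow_le_pow_left₀ (abs_nonneg _) h1 2
        _ ≤ (‖A (g t)‖ * ‖g t‖) ^ 2 := pow_le_pow_left₀ (norm_nonneg _) h2 2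
    have e1 : N1 t * N1 t = 4 * (⟪A (g t), g t⟫ : ℂ).re ^ 2 := by
      simp only [hN1def]; ring
    have e2 : 4 * ‖A (g t)‖ ^ 2 * N t = 4 * (‖A (g t)‖ * ‖g t‖) ^ 2 := by
      simp only [hNdef]; ring
    rw [e1, e2]
    linarith
  have hnonneg : ∀ t : ℝ, 0 ≤ deriv (deriv f) t := by
    intro t
    rw [hderiv2 t]
    apply div_nonneg
    · linarith [hnum t]
    · positivity
  refine ⟨?_, hnonneg, ?_⟩
  · -- convexity
    apply convexOn_of_deriv2_nonneg' convex_univ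
    · intro x _; exact (hf1 x).differentiableAt.differentiableWithinAt
    · intro x _; exact (hf2 x).differentiableAt.differentiableWithinAt
    · intro x _
      simpa [Function.iterate_succ, Function.comp] using hnonneg x
  · -- equality case
    intro t ht
    by_cases hAg0 : A (g t) = 0
    · exact ⟨0, by simp only [zero_smul]; exact hAg0⟩
    · rw [hderiv2 t] at ht
      have hnumeq : 4 * ‖A (g t)‖ ^ 2 * N t - N1 t * N1 t = 0 := by
        exact (div_eq_zero_iff.mp ht).resolve_right (pow_ne_zero 2 (hNne t))
      -- equality in Cauchy-Schwarz
      have heq : ‖(⟪A (g t), g t⟫ : ℂ)‖ = ‖A (g t)‖ * ‖g t‖ := by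
        have h2 : ‖(⟪A (g t), g t⟫ : ℂ)‖ ≤ ‖A (g t)‖ * ‖g t‖ := norm_inner_le_norm _ _
        have h1 : |(⟪A (g t), g t⟫ : ℂ).re| ≤ ‖(⟪A (g t), g t⟫ : ℂ)‖ :=
          Complex.abs_re_le_norm _
        have hsq : 4 * (⟪A (g t), g t⟫ : ℂ).re ^ 2 = 4 * (‖A (g t)‖ * ‖g t‖) ^ 2 := by
          have e1 : N1 t * N1 t = 4 * (⟪A (g t), g t⟫ : ℂ).re ^ 2 := by
            simp only [hN1def]; ring
          have e2 : 4 * ‖A (g t)‖ ^ 2 * N t = 4 * (‖A (g t)‖ * ‖g t‖) ^ 2 := by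
            simp only [hNdef]; ring
          rw [e1, e2] at hnumeq
          linarith
        nlinarith [norm_nonneg (⟪A (g t), g t⟫ : ℂ), norm_nonneg (A (g t)),
          norm_nonneg (g t), abs_nonneg ((⟪A (g t), g t⟫ : ℂ).re),
          sq_abs ((⟪A (g t), g t⟫ : ℂ).re)]
      have heq' : ‖(⟪g t, A (g t)⟫ : ℂ)‖ = ‖g t‖ * ‖A (g t)‖ := by
        rw [← hA (g t) (g t), heq]; ring
      obtain ⟨r, _, hr⟩ := (norm_inner_eq_norm_iff (hgne t) hAg0).mp heq'
      exact ⟨r, hr⟩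
end

section
/- Let A be a self-adjoint operator on a finite-dimensional complex inner product space V and v ≠ 0. Then the derivative of f(t) = ½ log ‖exp(tA)v‖² is f'(t) = ⟨A w(t), w(t)⟩ where w(t) = exp(tA)v / ‖exp(tA)v‖. In particular f'(0) = Re⟨Av, v⟩ / ‖v‖². -/
open scoped ComplexInnerProductSpace

/-- For a self-adjoint operator `A` on a finite-dimensional
complex inner product space and `v ≠ 0`, the function
`f(t) = ½ log ‖exp(tA)v‖²` has derivative `f'(t) = ⟨A w(t), w(t)⟩` (a real
number, as `A` is self-adjoint), where `w(t) = exp(tA)v/‖exp(tA)v‖`.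
In particular `f'(0) = Re⟨Av, v⟩/‖v‖²`. -/
theorem stmt12 {V : Type*} [NormedAddCommGroup V] [InnerProductSpace ℂ V]
    [FiniteDimensional ℂ V]
    (A : V →L[ℂ] V)
    (hA : ∀ x y : V, ⟪A x, y⟫ = ⟪x, A y⟫)   -- A self-adjoint
    (v : V) (hv : v ≠ 0)
    (f : ℝ → ℝ)
    (hf : ∀ t : ℝ, f t = (1 / 2) * Real.log (‖(NormedSpace.exp (t • A)) v‖ ^ 2))
    (w : ℝ → V)
    (hw : ∀ t : ℝ, w t = (‖(NormedSpace.exp (t • A)) v‖)⁻¹ • (NormedSpace.exp (t • A)) v) :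
    (∀ t : ℝ, HasDerivAt f ((⟪A (w t), w t⟫).re) t)
    ∧ deriv f 0 = (⟪A v, v⟫).re / ‖v‖ ^ 2 := by
  set g : ℝ → V := fun t => (NormedSpace.exp (t • A)) v with hg
  have hexp_eq : ∀ B : V →L[ℂ] V, NormedSpace.exp B = NormedSpace.exp B := fun B => by
    rfl
  -- g t ≠ 0
  have hgne : ∀ t : ℝ, g t ≠ 0 := by
    intro t h
    apply hv
    have h1 : NormedSpace.exp (-(t • A)) * NormedSpace.exp (t • A) = 1 := by
      rw [← NormedSpace.exp_add_of_commute_of_mem_ball (𝕂 := ℂ) (𝔸 := V →L[ℂ] V) (Commute.refl (t • A)).neg_left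
          ((NormedSpace.expSeries_radius_eq_top ℂ (V →L[ℂ] V)).symm ▸ edist_lt_top _ _)
          ((NormedSpace.expSeries_radius_eq_top ℂ (V →L[ℂ] V)).symm ▸ edist_lt_top _ _), neg_add_cancel,
        NormedSpace.exp_zero]
    calc v = (NormedSpace.exp (-(t • A)) * NormedSpace.exp (t • A)) v := by
            rw [h1]; rfl
      _ = (NormedSpace.exp (-(t • A))) (g t) := rfl
      _ = 0 := by rw [h]; exact map_zero _
  -- derivative of g
  have hgd : ∀ t : ℝ, HasDerivAt g (A (g t)) t := by
    intro t
    have h1 : HasDerivAt (fun u : ℝ => NormedSpace.exp (u • A))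
        (A * NormedSpace.exp (t • A)) t := hasDerivAt_exp_smul_const' A t
    have h2 := ((ContinuousLinearMap.apply ℂ V v).restrictScalars ℝ).hasFDerivAt.comp_hasDerivAt t h1
    simp only [ContinuousLinearMap.coe_restrictScalars', Function.comp_def,
      ContinuousLinearMap.apply_apply] at h2
    have h3 : (A * NormedSpace.exp (t • A)) v = A (g t) := by
      simp [hg, hexp_eq, ContinuousLinearMap.mul_apply]
    rw [h3] at h2
    convert h2 using 2 with u
  -- derivative of squared norm
  have hnd : ∀ t : ℝ, HasDerivAt (fun t => ‖g t‖ ^ 2) (2 * (⟪A (g t), g t⟫).re) t := by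
    intro t
    have h1 : HasDerivAt (fun t => (⟪g t, g t⟫ : ℂ))
        (⟪g t, A (g t)⟫ + ⟪A (g t), g t⟫) t := (hgd t).inner ℂ (hgd t)
    have h2 := (Complex.reCLM.hasFDerivAt.comp_hasDerivAt t h1)
    have h3 : Complex.reCLM (⟪g t, A (g t)⟫ + ⟪A (g t), g t⟫) = 2 * (⟪A (g t), g t⟫).re := by
      rw [← hA (g t) (g t)]
      simp; ring
    rw [h3] at h2
    refine HasDerivAt.congr_of_eventuallyEq h2 (Filter.Eventually.of_forall fun u => ?_)
    have := inner_self_eq_norm_sq (𝕜 := ℂ) (g u)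
    simpa using this.symm
  -- re of inner after real scaling
  have hscale : ∀ (r : ℝ) (x : V), (⟪A (r • x), r • x⟫).re = r ^ 2 * (⟪A x, x⟫).re := by
    intro r x
    rw [← Complex.coe_smul, map_smul, inner_smul_left, inner_smul_right, Complex.conj_ofReal,
      ← mul_assoc, ← Complex.ofReal_mul, Complex.re_ofReal_mul]
    ring
  -- main derivative computation
  have key : ∀ t : ℝ, HasDerivAt f ((⟪A (w t), w t⟫).re) t := by
    intro t
    have hgn : ‖g t‖ ≠ 0 := norm_ne_zero_iff.mpr (hgne t)
    have hne2 : ‖g t‖ ^ 2 ≠ 0 := pow_ne_zero _ hgn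
    have h1 := ((hnd t).log hne2).const_mul (1 / 2 : ℝ)
    have h2 : f = fun t => (1 / 2 : ℝ) * Real.log (‖g t‖ ^ 2) := funext hf
    rw [← h2] at h1
    refine h1.congr_deriv (Eq.symm ?_)
    have hwg : w t = ‖g t‖⁻¹ • g t := hw t
    rw [hwg, hscale]
    field_simp
  refine ⟨key, ?_⟩
  rw [(key 0).deriv, hw]
  have h0 : NormedSpace.exp ((0 : ℝ) • A) = 1 := by
    rw [zero_smul, NormedSpace.exp_zero]
  rw [h0]
  simp only [ContinuousLinearMap.one_apply]
  rw [hscale]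
  have hvn : ‖v‖ ≠ 0 := norm_ne_zero_iff.mpr hv
  field_simp
end
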